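/- arXiv:1408.2002 — 2 statements merged into one kernel-verified Lean document; each statement's English description precedes it below -/
import Mathlib

section
/- Let F = {{1,2,3},{1,4,5},{1,6,7},{2,4,7},{2,5,6},{3,4,6},{3,5,7}} and for each triple {i,j,k} ∈ F let S_{ijk} be the set of vectors in ℚ^7 whose coordinates at positions i, j, k are each ±2 and are 0 elsewhere; let S be the union of the seven sets S_{ijk}, and let H be the simple graph on S in which two distinct vectors are adjacent if and only if their squared Euclidean distance equals 16. Then H has exactly 56 vertices and its independence number equals 4. -/
set_option maxRecDepth 40000
set_option maxHeartbeats 1000000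


/-- The graph on a set `P` of points of `ℚⁿ` where two distinct points are
adjacent iff their squared Euclidean distance equals `s`. -/
def distSqGraph {n : ℕ} (P : Set (Fin n → ℚ)) (s : ℚ) : SimpleGraph P where
  Adj x y := x ≠ y ∧ ∑ i, (x.1 i - y.1 i) ^ 2 = s
  symm := by
    constructor
    rintro x y ⟨hne, h⟩
    refine ⟨hne.symm, ?_⟩
    rw [← h]
    exact Finset.sum_congr rfl fun i _ => by ring
  loopless := by constructor; rintro x ⟨h, -⟩; exact h rfl

/-- The family `F = {{1,2,3},{1,4,5},{1,6,7},{2,4,7},{2,5,6},{3,4,6},{3,5,7}}`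
of triples from `{1,…,7}`, written with `0`-based indices. -/
def fano : Finset (Finset (Fin 7)) :=
  {{0, 1, 2}, {0, 3, 4}, {0, 5, 6}, {1, 3, 6}, {1, 4, 5}, {2, 3, 5}, {2, 4, 6}}

/-- `S`: vectors of `ℚ⁷` that are `±2` on some triple of `F` and `0` elsewhere. -/
def Sset : Set (Fin 7 → ℚ) :=
  {x | ∃ A ∈ fano, (∀ i ∈ A, x i = 2 ∨ x i = -2) ∧ ∀ i ∉ A, x i = 0}

/-- `T`: vectors of `ℚ⁷` that are `0` on some triple of `F` and `±1` elsewhere. -/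
def Tset : Set (Fin 7 → ℚ) :=
  {x | ∃ A ∈ fano, (∀ i ∈ A, x i = 0) ∧ ∀ i ∉ A, x i = 1 ∨ x i = -1}

def lineOf (x : Fin 7 → ℚ) : Finset (Fin 7) := Finset.univ.filter (fun i => x i ≠ 0)

lemma fano_card : ∀ A ∈ fano, A.card = 3 := by decide
lemma fano_card7 : fano.card = 7 := by decide
lemma fano_inter : ∀ A ∈ fano, ∀ B ∈ fano, A ≠ B → (A ∩ B).card = 1 := by decide
lemma fano_compl2 : ∀ A ∈ fano, ∀ B ∈ fano, A ≠ B →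
    ∃ X ∈ fano, ∃ Y ∈ fano, ∃ Z ∈ fano, X ≠ Y ∧ X ≠ Z ∧ Y ≠ Z ∧
      X ≠ A ∧ X ≠ B ∧ Y ≠ A ∧ Y ≠ B ∧ Z ≠ A ∧ Z ≠ B ∧ (X ∩ Y ∩ Z).Nonempty := by decide
lemma five_two : ∀ b : Fin 5 → Bool, ∃ i j k : Fin 5,
    i ≠ j ∧ i ≠ k ∧ j ≠ k ∧ b i = b j ∧ b i = b k := by decide

lemma sset_struct {x : Fin 7 → ℚ} (hx : x ∈ Sset) :
    lineOf x ∈ fano ∧ (∀ i ∈ lineOf x, x i = 2 ∨ x i = -2) ∧ (∀ i ∉ lineOf x, x i = 0) := by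
  obtain ⟨A, hA, h1, h2⟩ := hx
  have hline : lineOf x = A := by
    ext i
    simp only [lineOf, Finset.mem_filter, Finset.mem_univ, true_and]
    constructor
    · intro h; by_contra hi; exact h (h2 i hi)
    · intro hi; rcases h1 i hi with h | h <;> rw [h] <;> norm_num
  rw [hline]; exact ⟨hA, h1, h2⟩

lemma pm {x : Fin 7 → ℚ} (hx : x ∈ Sset) {i : Fin 7} (hi : i ∈ lineOf x) :
    x i = 2 ∨ x i = -2 := (sset_struct hx).2.1 i hi

lemma zero_off {x : Fin 7 → ℚ} (hx : x ∈ Sset) {i : Fin 7} (hi : i ∉ lineOf x) :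
    x i = 0 := (sset_struct hx).2.2 i hi

lemma line_mem_fano {x : Fin 7 → ℚ} (hx : x ∈ Sset) : lineOf x ∈ fano := (sset_struct hx).1

lemma sum_eq_line {x y : Fin 7 → ℚ} (hx : x ∈ Sset) (hy : y ∈ Sset) :
    ∑ i, (x i - y i) ^ 2 = ∑ i ∈ lineOf x ∪ lineOf y, (x i - y i) ^ 2 := by
  symm
  apply Finset.sum_subset (Finset.subset_univ _)
  intro i _ hi
  rw [Finset.mem_union] at hi
  push_neg at hi
  rw [zero_off hx hi.1, zero_off hy hi.2]
  ring

lemma sum_same_line {x y : Fin 7 → ℚ} (hx : x ∈ Sset) (hy : y ∈ Sset)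
    (h : lineOf x = lineOf y) :
    ∑ i, (x i - y i) ^ 2 = 16 * ((lineOf x).filter (fun i => x i ≠ y i)).card := by
  have h1 : ∑ i, (x i - y i) ^ 2 = ∑ i ∈ lineOf x, (x i - y i) ^ 2 := by
    rw [sum_eq_line hx hy, ← h, Finset.union_self]
  rw [h1]
  have h2 : ∑ i ∈ lineOf x, (x i - y i) ^ 2
      = ∑ i ∈ (lineOf x).filter (fun i => x i ≠ y i), (x i - y i) ^ 2 := by
    symm
    apply Finset.sum_subset (Finset.filter_subset _ _)
    intro i hi hni
    simp only [Finset.mem_filter, not_and, not_not] at hni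
    rw [hni hi]; ring
  rw [h2]
  have h3 : ∀ i ∈ (lineOf x).filter (fun i => x i ≠ y i), (x i - y i) ^ 2 = 16 := by
    intro i hi
    rw [Finset.mem_filter] at hi
    have hyi : i ∈ lineOf y := by rw [← h]; exact hi.1
    rcases pm hx hi.1 with h1 | h1 <;> rcases pm hy hyi with h2 | h2 <;>
      first
        | exact absurd (h1.trans h2.symm) hi.2
        | (rw [h1, h2]; norm_num)
  rw [Finset.sum_congr rfl h3, Finset.sum_const, nsmul_eq_mul, mul_comm]

lemma sum_cross {x y : Fin 7 → ℚ} (hx : x ∈ Sset) (hy : y ∈ Sset)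
    (hne : lineOf x ≠ lineOf y) {p : Fin 7} (hp : lineOf x ∩ lineOf y = {p}) :
    ∑ i, (x i - y i) ^ 2 = (x p - y p) ^ 2 + 16 := by
  have hpA : p ∈ lineOf x := by
    have : p ∈ lineOf x ∩ lineOf y := by rw [hp]; exact Finset.mem_singleton_self p
    exact (Finset.mem_inter.mp this).1
  have hpB : p ∈ lineOf y := by
    have : p ∈ lineOf x ∩ lineOf y := by rw [hp]; exact Finset.mem_singleton_self p
    exact (Finset.mem_inter.mp this).2
  have hunion : lineOf x ∪ lineOf y
      = insert p ((lineOf x).erase p ∪ (lineOf y).erase p) := by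
    ext i
    by_cases hip : i = p
    · subst hip; simp [hpA]
    · simp [hip, Finset.mem_erase]
  have hdisj : Disjoint ((lineOf x).erase p) ((lineOf y).erase p) := by
    rw [Finset.disjoint_left]
    intro i hi1 hi2
    rw [Finset.mem_erase] at hi1 hi2
    have : i ∈ lineOf x ∩ lineOf y := Finset.mem_inter.mpr ⟨hi1.2, hi2.2⟩
    rw [hp, Finset.mem_singleton] at this
    exact hi1.1 this
  have hnotmem : p ∉ (lineOf x).erase p ∪ (lineOf y).erase p := by
    simp
  have hsA : ∑ i ∈ (lineOf x).erase p, (x i - y i) ^ 2 = 8 := by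
    have hc : ((lineOf x).erase p).card = 2 := by
      rw [Finset.card_erase_of_mem hpA, fano_card _ (line_mem_fano hx)]
    have : ∀ i ∈ (lineOf x).erase p, (x i - y i) ^ 2 = 4 := by
      intro i hi
      rw [Finset.mem_erase] at hi
      have hiB : i ∉ lineOf y := by
        intro hiB
        have : i ∈ lineOf x ∩ lineOf y := Finset.mem_inter.mpr ⟨hi.2, hiB⟩
        rw [hp, Finset.mem_singleton] at this
        exact hi.1 this
      rw [zero_off hy hiB]
      rcases pm hx hi.2 with h1 | h1 <;> rw [h1] <;> norm_num
    rw [Finset.sum_congr rfl this, Finset.sum_const, hc]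
    norm_num
  have hsB : ∑ i ∈ (lineOf y).erase p, (x i - y i) ^ 2 = 8 := by
    have hc : ((lineOf y).erase p).card = 2 := by
      rw [Finset.card_erase_of_mem hpB, fano_card _ (line_mem_fano hy)]
    have : ∀ i ∈ (lineOf y).erase p, (x i - y i) ^ 2 = 4 := by
      intro i hi
      rw [Finset.mem_erase] at hi
      have hiA : i ∉ lineOf x := by
        intro hiA
        have : i ∈ lineOf x ∩ lineOf y := Finset.mem_inter.mpr ⟨hiA, hi.2⟩
        rw [hp, Finset.mem_singleton] at this
        exact hi.1 this
      rw [zero_off hx hiA]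
      rcases pm hy hi.2 with h1 | h1 <;> rw [h1] <;> norm_num
    rw [Finset.sum_congr rfl this, Finset.sum_const, hc]
    norm_num
  rw [sum_eq_line hx hy, hunion, Finset.sum_insert hnotmem, Finset.sum_union hdisj, hsA, hsB]
  ring

/-- On different lines, non-adjacency forces opposite signs at any common point. -/
lemma cross_opp {x y : Fin 7 → ℚ} (hx : x ∈ Sset) (hy : y ∈ Sset)
    (hne : lineOf x ≠ lineOf y) (hd : ∑ i, (x i - y i) ^ 2 ≠ 16)
    {p : Fin 7} (hpx : p ∈ lineOf x) (hpy : p ∈ lineOf y) : x p = -y p := by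
  have hcard := fano_inter _ (line_mem_fano hx) _ (line_mem_fano hy) hne
  obtain ⟨q, hq⟩ := Finset.card_eq_one.mp hcard
  have hpq : p = q := by
    have : p ∈ lineOf x ∩ lineOf y := Finset.mem_inter.mpr ⟨hpx, hpy⟩
    rw [hq, Finset.mem_singleton] at this; exact this
  subst hpq
  have hsum := sum_cross hx hy hne hq
  have hne' : x p ≠ y p := by
    intro h
    apply hd
    rw [hsum, h]; ring
  rcases pm hx hpx with h1 | h1 <;> rcases pm hy hpy with h2 | h2 <;>
    first
      | exact absurd (h1.trans h2.symm) hne'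
      | (rw [h1, h2]; try norm_num)

lemma same_line_strong {x y : Fin 7 → ℚ} (hx : x ∈ Sset) (hy : y ∈ Sset)
    (h : lineOf x = lineOf y) (hxy : x ≠ y) (hd : ∑ i, (x i - y i) ^ 2 ≠ 16)
    {p q : Fin 7} (hp : p ∈ lineOf x) (hq : q ∈ lineOf x) (hpq : p ≠ q)
    (hagree : x p = y p) : x q ≠ y q := by
  intro hq2
  set D := (lineOf x).filter (fun i => x i ≠ y i) with hD
  have hsum := sum_same_line hx hy h
  have hD1 : D.card ≠ 1 := by
    intro h1
    apply hd
    rw [hsum, h1]; norm_num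
  have hD0 : D.card ≠ 0 := by
    intro h0
    apply hxy
    funext i
    by_cases hi : i ∈ lineOf x
    · by_contra hne
      have : i ∈ D := Finset.mem_filter.mpr ⟨hi, hne⟩
      rw [Finset.card_eq_zero.mp h0] at this
      exact absurd this (Finset.notMem_empty i)
    · rw [zero_off hx hi, zero_off hy (h ▸ hi)]
  have hD2 : 2 ≤ D.card := by omega
  have hsub : D ⊆ (lineOf x) \ {p, q} := by
    intro i hi
    rw [Finset.mem_filter] at hi
    rw [Finset.mem_sdiff]
    refine ⟨hi.1, ?_⟩
    simp only [Finset.mem_insert, Finset.mem_singleton]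
    rintro (rfl | rfl)
    · exact hi.2 hagree
    · exact hi.2 hq2
  have hcard : ((lineOf x) \ {p, q}).card = 1 := by
    have hsub2 : ({p, q} : Finset (Fin 7)) ⊆ lineOf x := by
      intro i hi
      simp only [Finset.mem_insert, Finset.mem_singleton] at hi
      rcases hi with rfl | rfl
      · exact hp
      · exact hq
    rw [Finset.card_sdiff_of_subset hsub2, fano_card _ (line_mem_fano hx), Finset.card_pair hpq]
  have := Finset.card_le_card hsub
  omega

lemma three_pm {a b c : ℚ} (ha : a = 2 ∨ a = -2) (hb : b = 2 ∨ b = -2)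
    (hc : c = 2 ∨ c = -2) (hab : a ≠ b) (hac : a ≠ c) (hbc : b ≠ c) : False := by
  rcases ha with rfl | rfl <;> rcases hb with rfl | rfl <;> rcases hc with rfl | rfl <;>
    simp_all

lemma three_same_line {x y z : Fin 7 → ℚ} (hx : x ∈ Sset) (hy : y ∈ Sset) (hz : z ∈ Sset)
    (hly : lineOf x = lineOf y) (hlz : lineOf x = lineOf z)
    (hxy : x ≠ y) (hxz : x ≠ z) (hyz : y ≠ z)
    (dxy : ∑ i, (x i - y i) ^ 2 ≠ 16) (dxz : ∑ i, (x i - z i) ^ 2 ≠ 16)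
    (dyz : ∑ i, (y i - z i) ^ 2 ≠ 16)
    {p : Fin 7} (hp : p ∈ lineOf x) (axy : x p = y p) (axz : x p = z p) : False := by
  have hcard := fano_card _ (line_mem_fano hx)
  have hnq : ∃ q ∈ lineOf x, q ≠ p := by
    have h2 : ((lineOf x).erase p).card = 2 := by
      rw [Finset.card_erase_of_mem hp, hcard]
    have : ((lineOf x).erase p).Nonempty := by
      rw [← Finset.card_pos, h2]; norm_num
    obtain ⟨q, hq⟩ := this
    rw [Finset.mem_erase] at hq
    exact ⟨q, hq.2, hq.1⟩
  obtain ⟨q, hq, hqp⟩ := hnq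
  have h1 : x q ≠ y q := same_line_strong hx hy hly hxy dxy hp hq (Ne.symm hqp) axy
  have h2 : x q ≠ z q := same_line_strong hx hz hlz hxz dxz hp hq (Ne.symm hqp) axz
  have h3 : y q ≠ z q := by
    apply same_line_strong hy hz (hly ▸ hlz) hyz dyz (hly ▸ hp) (hly ▸ hq) (Ne.symm hqp)
    rw [← axy, axz]
  exact three_pm (pm hx hq) (pm hy (hly ▸ hq)) (pm hz (hlz ▸ hq)) h1 h2 h3

lemma three_plus_outside {x y z w : Fin 7 → ℚ} (hx : x ∈ Sset) (hy : y ∈ Sset)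
    (hz : z ∈ Sset) (hw : w ∈ Sset)
    (hly : lineOf x = lineOf y) (hlz : lineOf x = lineOf z) (hlw : lineOf w ≠ lineOf x)
    (hxy : x ≠ y) (hxz : x ≠ z) (hyz : y ≠ z)
    (dxy : ∑ i, (x i - y i) ^ 2 ≠ 16) (dxz : ∑ i, (x i - z i) ^ 2 ≠ 16)
    (dyz : ∑ i, (y i - z i) ^ 2 ≠ 16)
    (dxw : ∑ i, (x i - w i) ^ 2 ≠ 16) (dyw : ∑ i, (y i - w i) ^ 2 ≠ 16)
    (dzw : ∑ i, (z i - w i) ^ 2 ≠ 16) : False := by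
  have hcard := fano_inter _ (line_mem_fano hx) _ (line_mem_fano hw) (Ne.symm hlw)
  obtain ⟨p, hp⟩ := Finset.card_eq_one.mp hcard
  have hpmem : p ∈ lineOf x ∩ lineOf w := by rw [hp]; exact Finset.mem_singleton_self p
  rw [Finset.mem_inter] at hpmem
  have h1 : x p = -w p := cross_opp hx hw (Ne.symm hlw) dxw hpmem.1 hpmem.2
  have h2 : y p = -w p := cross_opp hy hw (fun h => hlw (h ▸ hly).symm) dyw (hly ▸ hpmem.1) hpmem.2
  have h3 : z p = -w p := cross_opp hz hw (fun h => hlw (h ▸ hlz).symm) dzw (hlz ▸ hpmem.1) hpmem.2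
  exact three_same_line hx hy hz hly hlz hxy hxz hyz dxy dxz dyz hpmem.1
    (h1.trans h2.symm) (h1.trans h3.symm)

lemma exists_three {α : Type*} [DecidableEq α] (s : Finset α) (h : 3 ≤ s.card) :
    ∃ a ∈ s, ∃ b ∈ s, ∃ c ∈ s, a ≠ b ∧ a ≠ c ∧ b ≠ c := by
  obtain ⟨t, hts, ht⟩ := Finset.exists_subset_card_eq h
  obtain ⟨a, b, c, hab, hac, hbc, rfl⟩ := Finset.card_eq_three.mp ht
  exact ⟨a, hts (by simp), b, hts (by simp), c, hts (by simp), hab, hac, hbc⟩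

lemma no_five (x : Fin 5 → (Fin 7 → ℚ)) (hS : ∀ i, x i ∈ Sset)
    (hne : ∀ i j, i ≠ j → x i ≠ x j)
    (hd : ∀ i j, i ≠ j → ∑ k, (x i k - x j k) ^ 2 ≠ 16) : False := by
  have idx_ne : ∀ {a b : Fin 5}, lineOf (x a) ≠ lineOf (x b) → a ≠ b :=
    fun h hab => h (by rw [hab])
  by_cases hall : ∀ i j : Fin 5, lineOf (x i) = lineOf (x j)
  · -- all on one line
    have hp : ∃ p, p ∈ lineOf (x 0) := by
      have h3 := fano_card _ (line_mem_fano (hS 0))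
      have : (lineOf (x 0)).Nonempty := by rw [← Finset.card_pos, h3]; norm_num
      exact this
    obtain ⟨p, hp⟩ := hp
    obtain ⟨i, j, k, hij, hik, hjk, hbij, hbik⟩ :=
      five_two (fun i => decide (x i p = 2))
    have hval : ∀ a b : Fin 5, decide (x a p = 2) = decide (x b p = 2) → x a p = x b p := by
      intro a b hab
      have hiff : (x a p = 2) ↔ (x b p = 2) := decide_eq_decide.mp hab
      rcases pm (hS a) ((hall a 0) ▸ hp) with h1 | h1 <;>
        rcases pm (hS b) ((hall b 0) ▸ hp) with h2 | h2
      · rw [h1, h2]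
      · exfalso; have := hiff.mp h1; rw [h2] at this; norm_num at this
      · exfalso; have := hiff.mpr h2; rw [h1] at this; norm_num at this
      · rw [h1, h2]
    exact three_same_line (hS i) (hS j) (hS k) (hall i j) (hall i k)
      (hne i j hij) (hne i k hik) (hne j k hjk)
      (hd i j hij) (hd i k hik) (hd j k hjk) ((hall i 0) ▸ hp)
      (hval i j hbij) (hval i k hbik)
  · push_neg at hall
    obtain ⟨i0, j0, hij0⟩ := hall
    by_cases hrep : ∃ i j, i ≠ j ∧ lineOf (x i) = lineOf (x j)
    · -- Case A : a repeated line, and some other line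
      obtain ⟨i, j, hij, hlij⟩ := hrep
      have hk : ∃ k, lineOf (x k) ≠ lineOf (x i) := by
        by_cases h0 : lineOf (x i0) = lineOf (x i)
        · exact ⟨j0, fun h => hij0 (h0.trans h.symm)⟩
        · exact ⟨i0, h0⟩
      obtain ⟨k, hk⟩ := hk
      have hcard := fano_inter _ (line_mem_fano (hS i)) _ (line_mem_fano (hS k)) (Ne.symm hk)
      obtain ⟨p, hp⟩ := Finset.card_eq_one.mp hcard
      have hpmem : p ∈ lineOf (x i) ∩ lineOf (x k) := by
        rw [hp]; exact Finset.mem_singleton_self p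
      rw [Finset.mem_inter] at hpmem
      have hkj : lineOf (x k) ≠ lineOf (x j) := by rw [← hlij]; exact hk
      have e1 : x i p = -(x k p) :=
        cross_opp (hS i) (hS k) (Ne.symm hk) (hd i k (idx_ne (Ne.symm hk))) hpmem.1 hpmem.2
      have e2 : x j p = -(x k p) :=
        cross_opp (hS j) (hS k) (Ne.symm hkj) (hd j k (idx_ne (Ne.symm hkj)))
          (hlij ▸ hpmem.1) hpmem.2
      have agree_p : x i p = x j p := e1.trans e2.symm
      -- every index whose line differs from line i : its line passes through p, opposite sign
      have claim1 : ∀ m, lineOf (x m) ≠ lineOf (x i) →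
          p ∈ lineOf (x m) ∧ x m p = -(x i p) := by
        intro m hm
        have hcardm := fano_inter _ (line_mem_fano (hS i)) _ (line_mem_fano (hS m)) (Ne.symm hm)
        obtain ⟨q, hq⟩ := Finset.card_eq_one.mp hcardm
        have hqmem : q ∈ lineOf (x i) ∩ lineOf (x m) := by
          rw [hq]; exact Finset.mem_singleton_self q
        rw [Finset.mem_inter] at hqmem
        have hmj : lineOf (x m) ≠ lineOf (x j) := by rw [← hlij]; exact hm
        have f1 : x i q = -(x m q) :=
          cross_opp (hS i) (hS m) (Ne.symm hm) (hd i m (idx_ne (Ne.symm hm))) hqmem.1 hqmem.2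
        have f2 : x j q = -(x m q) :=
          cross_opp (hS j) (hS m) (Ne.symm hmj) (hd j m (idx_ne (Ne.symm hmj)))
            (hlij ▸ hqmem.1) hqmem.2
        have agree_q : x i q = x j q := f1.trans f2.symm
        have hqp : q = p := by
          by_contra hqp
          exact same_line_strong (hS i) (hS j) hlij (hne i j hij) (hd i j hij)
            hpmem.1 hqmem.1 (Ne.symm hqp) agree_p agree_q
        subst hqp
        exact ⟨hqmem.2, by rw [f1]; ring⟩
      -- at most two indices on line i
      set s := Finset.univ.filter (fun m => lineOf (x m) = lineOf (x i)) with hs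
      by_cases hs3 : 3 ≤ s.card
      · obtain ⟨a, ha, b, hb, c, hc, hab, hac, hbc⟩ := exists_three s hs3
        rw [hs, Finset.mem_filter] at ha hb hc
        exact three_plus_outside (hS a) (hS b) (hS c) (hS k)
          (ha.2.trans hb.2.symm) (ha.2.trans hc.2.symm) (by rw [ha.2]; exact hk)
          (hne a b hab) (hne a c hac) (hne b c hbc)
          (hd a b hab) (hd a c hac) (hd b c hbc)
          (hd a k (idx_ne (by rw [ha.2]; exact Ne.symm hk)))
          (hd b k (idx_ne (by rw [hb.2]; exact Ne.symm hk)))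
          (hd c k (idx_ne (by rw [hc.2]; exact Ne.symm hk)))
      · have hcards : s.card + (Finset.univ.filter (fun m => ¬ lineOf (x m) = lineOf (x i))).card
            = 5 := by
          rw [hs, Finset.card_filter_add_card_filter_not]
          simp
        set t := Finset.univ.filter (fun m => ¬ lineOf (x m) = lineOf (x i)) with ht
        have ht3 : 3 ≤ t.card := by omega
        obtain ⟨a, ha, b, hb, c, hc, hab, hac, hbc⟩ := exists_three t ht3
        rw [ht, Finset.mem_filter] at ha hb hc
        -- all three off-line indices share the same line
        have same_ab : ∀ {u v : Fin 5}, u ≠ v → lineOf (x u) ≠ lineOf (x i) →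
            lineOf (x v) ≠ lineOf (x i) → lineOf (x u) = lineOf (x v) := by
          intro u v huv hu hv
          by_contra huvl
          obtain ⟨hpu, hou⟩ := claim1 u hu
          obtain ⟨hpv, hov⟩ := claim1 v hv
          have g1 : x u p = -(x v p) := cross_opp (hS u) (hS v) huvl (hd u v huv) hpu hpv
          have g2 : x u p = x v p := by rw [hou, hov]
          have : x v p = 0 := by
            have := g1.symm.trans g2
            linarith
          rcases pm (hS v) hpv with h1 | h1 <;> rw [h1] at this <;> norm_num at this
        have lab : lineOf (x a) = lineOf (x b) := same_ab hab ha.2 hb.2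
        have lac : lineOf (x a) = lineOf (x c) := same_ab hac ha.2 hc.2
        exact three_plus_outside (hS a) (hS b) (hS c) (hS i)
          lab lac (Ne.symm ha.2)
          (hne a b hab) (hne a c hac) (hne b c hbc)
          (hd a b hab) (hd a c hac) (hd b c hbc)
          (hd a i (idx_ne ha.2)) (hd b i (idx_ne hb.2)) (hd c i (idx_ne hc.2))
    · -- Case C : all lines distinct
      push_neg at hrep
      have hinj : Function.Injective (fun m => lineOf (x m)) := by
        intro a b hab
        by_contra h
        exact hrep a b h hab
      set T := Finset.univ.image (fun m => lineOf (x m)) with hT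
      have hTcard : T.card = 5 := by
        rw [hT, Finset.card_image_of_injective _ hinj, Finset.card_univ, Fintype.card_fin]
      have hTsub : T ⊆ fano := by
        intro A hA
        rw [hT, Finset.mem_image] at hA
        obtain ⟨m, _, rfl⟩ := hA
        exact line_mem_fano (hS m)
      have hcompl : (fano \ T).card = 2 := by
        rw [Finset.card_sdiff_of_subset hTsub, fano_card7, hTcard]
      obtain ⟨A, B, hAB, hABeq⟩ := Finset.card_eq_two.mp hcompl
      have hAf : A ∈ fano := by
        have : A ∈ fano \ T := by rw [hABeq]; simp
        exact (Finset.mem_sdiff.mp this).1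
      have hBf : B ∈ fano := by
        have : B ∈ fano \ T := by rw [hABeq]; simp
        exact (Finset.mem_sdiff.mp this).1
      obtain ⟨X, hXf, Y, hYf, Z, hZf, hXY, hXZ, hYZ, hXA, hXB, hYA, hYB, hZA, hZB, q, hq⟩ :=
        fano_compl2 A hAf B hBf hAB
      have memT : ∀ W, W ∈ fano → W ≠ A → W ≠ B → ∃ m, lineOf (x m) = W := by
        intro W hWf hWA hWB
        have : W ∈ T := by
          by_contra hWT
          have : W ∈ fano \ T := Finset.mem_sdiff.mpr ⟨hWf, hWT⟩
          rw [hABeq, Finset.mem_insert, Finset.mem_singleton] at this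
          rcases this with h | h
          · exact hWA h
          · exact hWB h
        rw [hT, Finset.mem_image] at this
        obtain ⟨m, _, hm⟩ := this
        exact ⟨m, hm⟩
      obtain ⟨a, hla⟩ := memT X hXf hXA hXB
      obtain ⟨b, hlb⟩ := memT Y hYf hYA hYB
      obtain ⟨c, hlc⟩ := memT Z hZf hZA hZB
      rw [Finset.mem_inter, Finset.mem_inter] at hq
      have hqa : q ∈ lineOf (x a) := by rw [hla]; exact hq.1.1
      have hqb : q ∈ lineOf (x b) := by rw [hlb]; exact hq.1.2
      have hqc : q ∈ lineOf (x c) := by rw [hlc]; exact hq.2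
      have lab : lineOf (x a) ≠ lineOf (x b) := by rw [hla, hlb]; exact hXY
      have lac : lineOf (x a) ≠ lineOf (x c) := by rw [hla, hlc]; exact hXZ
      have lbc : lineOf (x b) ≠ lineOf (x c) := by rw [hlb, hlc]; exact hYZ
      have g1 : x a q = -(x b q) := cross_opp (hS a) (hS b) lab (hd a b (idx_ne lab)) hqa hqb
      have g2 : x a q = -(x c q) := cross_opp (hS a) (hS c) lac (hd a c (idx_ne lac)) hqa hqc
      have g3 : x b q = -(x c q) := cross_opp (hS b) (hS c) lbc (hd b c (idx_ne lbc)) hqb hqc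
      have : x c q = 0 := by linarith [g1, g2, g3]
      rcases pm (hS c) hqc with h1 | h1 <;> rw [h1] at this <;> norm_num at this

def vecOf (A : Finset (Fin 7)) (s : Fin 7 → Bool) : Fin 7 → ℚ :=
  fun i => if i ∈ A then (if s i then 2 else -2) else 0

def SFpairs : Finset (Finset (Fin 7) × (Fin 7 → Bool)) :=
  (fano ×ˢ (Finset.univ : Finset (Fin 7 → Bool))).filter
    (fun p => ∀ i ∉ p.1, p.2 i = false)

def SF : Finset (Fin 7 → ℚ) := SFpairs.image (fun p => vecOf p.1 p.2)

lemma SFpairs_card : SFpairs.card = 56 := by decide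

lemma vecOf_injOn : Set.InjOn (fun p : Finset (Fin 7) × (Fin 7 → Bool) => vecOf p.1 p.2)
    SFpairs := by
  rintro ⟨A, s⟩ hA ⟨B, t⟩ hB heq
  rw [Finset.mem_coe] at hA hB
  simp only [SFpairs, Finset.mem_filter, Finset.mem_product] at hA hB
  have hAB : A = B := by
    ext i
    have hcf := congrFun heq i
    simp only [vecOf] at hcf
    constructor
    · intro hi
      by_contra hiB
      rw [if_pos hi, if_neg hiB] at hcf
      cases h : s i <;> simp only [h] at hcf <;> norm_num at hcf
    · intro hi
      by_contra hiA
      rw [if_neg hiA, if_pos hi] at hcf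
      cases h : t i <;> simp only [h] at hcf <;> norm_num at hcf
  subst hAB
  have hst : s = t := by
    funext i
    by_cases hi : i ∈ A
    · have hcf := congrFun heq i
      simp only [vecOf, if_pos hi] at hcf
      cases h : s i <;> cases h' : t i <;> simp only [h, h'] at hcf ⊢ <;>
        first | rfl | norm_num at hcf
    · rw [hA.2 i hi, hB.2 i hi]
  rw [hst]

lemma SF_card : SF.card = 56 := by
  rw [SF, Finset.card_image_of_injOn vecOf_injOn, SFpairs_card]

lemma Sset_eq : Sset = ↑SF := by
  ext x
  constructor
  · rintro ⟨A, hA, h1, h2⟩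
    have hx : x = vecOf A (fun i => decide (x i = 2)) := by
      funext i
      simp only [vecOf]
      by_cases hi : i ∈ A
      · rw [if_pos hi]
        rcases h1 i hi with h | h
        · have hs : decide (x i = 2) = true := decide_eq_true h
          simp only [hs, if_pos]
          exact h
        · have hs : decide (x i = 2) = false := decide_eq_false (by rw [h]; norm_num)
          simp only [hs]
          norm_num
          exact h
      · rw [if_neg hi]; exact h2 i hi
    show x ∈ SF
    rw [SF, Finset.mem_image]
    refine ⟨(A, fun i => decide (x i = 2)), ?_, hx.symm⟩
    simp only [SFpairs, Finset.mem_filter, Finset.mem_product]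
    refine ⟨⟨hA, Finset.mem_univ _⟩, ?_⟩
    intro i hi
    simp only [h2 i hi]
    norm_num
  · intro hx
    have hx' : x ∈ SF := hx
    rw [SF, Finset.mem_image] at hx'
    obtain ⟨⟨A, s⟩, hmem, rfl⟩ := hx'
    simp only [SFpairs, Finset.mem_filter, Finset.mem_product] at hmem
    refine ⟨A, hmem.1.1, ?_, ?_⟩
    · intro i hi
      simp only [vecOf, if_pos hi]
      rcases Bool.dichotomy (s i) with h | h <;> simp only [h] <;> norm_num
    · intro i hi
      simp only [vecOf, if_neg hi]

lemma Sset_ncard : Sset.ncard = 56 := by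
  rw [Sset_eq, Set.ncard_coe_finset, SF_card]

lemma Sset_finite : Sset.Finite := by rw [Sset_eq]; exact SF.finite_toSet

lemma exists_five_fs {α : Type*} [DecidableEq α] (s : Finset α) (h : 5 ≤ s.card) :
    ∃ a ∈ s, ∃ b ∈ s, ∃ c ∈ s, ∃ d ∈ s, ∃ e ∈ s,
      a ≠ b ∧ a ≠ c ∧ a ≠ d ∧ a ≠ e ∧ b ≠ c ∧ b ≠ d ∧ b ≠ e ∧ c ≠ d ∧ c ≠ e ∧ d ≠ e := by
  obtain ⟨t, hts, ht⟩ := Finset.exists_subset_card_eq h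
  rw [show (5 : ℕ) = 4 + 1 from rfl, Finset.card_eq_succ] at ht
  obtain ⟨a, t1, ha1, rfl, ht1⟩ := ht
  rw [show (4 : ℕ) = 3 + 1 from rfl, Finset.card_eq_succ] at ht1
  obtain ⟨b, t2, hb2, rfl, ht2⟩ := ht1
  obtain ⟨c, d, e, hcd, hce, hde, rfl⟩ := Finset.card_eq_three.mp ht2
  refine ⟨a, hts (by simp), b, hts (by simp), c, hts (by simp), d, hts (by simp),
    e, hts (by simp), ?_, ?_, ?_, ?_, ?_, ?_, ?_, hcd, hce, hde⟩ <;>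
    simp only [Finset.mem_insert, Finset.mem_singleton, not_or] at ha1 hb2 <;> tauto

-- the four-element independent set
def v1 : Fin 7 → ℚ := ![2, 2, 2, 0, 0, 0, 0]
def v2 : Fin 7 → ℚ := ![2, -2, -2, 0, 0, 0, 0]
def v3 : Fin 7 → ℚ := ![-2, 2, -2, 0, 0, 0, 0]
def v4 : Fin 7 → ℚ := ![-2, -2, 2, 0, 0, 0, 0]

lemma v1S : v1 ∈ Sset := ⟨{0, 1, 2}, by decide, by decide, by decide⟩
lemma v2S : v2 ∈ Sset := ⟨{0, 1, 2}, by decide, by decide, by decide⟩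
lemma v3S : v3 ∈ Sset := ⟨{0, 1, 2}, by decide, by decide, by decide⟩
lemma v4S : v4 ∈ Sset := ⟨{0, 1, 2}, by decide, by decide, by decide⟩


lemma sum_sq_comm (a b : Fin 7 → ℚ) : ∑ i, (a i - b i) ^ 2 = ∑ i, (b i - a i) ^ 2 :=
  Finset.sum_congr rfl fun i _ => by ring

lemma d12 : ∑ k, (v1 k - v2 k) ^ 2 = 32 := by
  rw [Fin.sum_univ_seven]
  norm_num [show v1 0 = 2 from rfl, show v1 1 = 2 from rfl, show v1 2 = 2 from rfl, show v1 3 = 0 from rfl, show v1 4 = 0 from rfl, show v1 5 = 0 from rfl, show v1 6 = 0 from rfl, show v2 0 = 2 from rfl, show v2 1 = -2 from rfl, show v2 2 = -2 from rfl, show v2 3 = 0 from rfl, show v2 4 = 0 from rfl, show v2 5 = 0 from rfl, show v2 6 = 0 from rfl]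
lemma n12 : ∑ k, (v1 k - v2 k) ^ 2 ≠ 16 := by rw [d12]; norm_num
lemma n21 : ∑ k, (v2 k - v1 k) ^ 2 ≠ 16 := by rw [sum_sq_comm, d12]; norm_num
lemma d13 : ∑ k, (v1 k - v3 k) ^ 2 = 32 := by
  rw [Fin.sum_univ_seven]
  norm_num [show v1 0 = 2 from rfl, show v1 1 = 2 from rfl, show v1 2 = 2 from rfl, show v1 3 = 0 from rfl, show v1 4 = 0 from rfl, show v1 5 = 0 from rfl, show v1 6 = 0 from rfl, show v3 0 = -2 from rfl, show v3 1 = 2 from rfl, show v3 2 = -2 from rfl, show v3 3 = 0 from rfl, show v3 4 = 0 from rfl, show v3 5 = 0 from rfl, show v3 6 = 0 from rfl]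
lemma n13 : ∑ k, (v1 k - v3 k) ^ 2 ≠ 16 := by rw [d13]; norm_num
lemma n31 : ∑ k, (v3 k - v1 k) ^ 2 ≠ 16 := by rw [sum_sq_comm, d13]; norm_num
lemma d14 : ∑ k, (v1 k - v4 k) ^ 2 = 32 := by
  rw [Fin.sum_univ_seven]
  norm_num [show v1 0 = 2 from rfl, show v1 1 = 2 from rfl, show v1 2 = 2 from rfl, show v1 3 = 0 from rfl, show v1 4 = 0 from rfl, show v1 5 = 0 from rfl, show v1 6 = 0 from rfl, show v4 0 = -2 from rfl, show v4 1 = -2 from rfl, show v4 2 = 2 from rfl, show v4 3 = 0 from rfl, show v4 4 = 0 from rfl, show v4 5 = 0 from rfl, show v4 6 = 0 from rfl]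
lemma n14 : ∑ k, (v1 k - v4 k) ^ 2 ≠ 16 := by rw [d14]; norm_num
lemma n41 : ∑ k, (v4 k - v1 k) ^ 2 ≠ 16 := by rw [sum_sq_comm, d14]; norm_num
lemma d23 : ∑ k, (v2 k - v3 k) ^ 2 = 32 := by
  rw [Fin.sum_univ_seven]
  norm_num [show v2 0 = 2 from rfl, show v2 1 = -2 from rfl, show v2 2 = -2 from rfl, show v2 3 = 0 from rfl, show v2 4 = 0 from rfl, show v2 5 = 0 from rfl, show v2 6 = 0 from rfl, show v3 0 = -2 from rfl, show v3 1 = 2 from rfl, show v3 2 = -2 from rfl, show v3 3 = 0 from rfl, show v3 4 = 0 from rfl, show v3 5 = 0 from rfl, show v3 6 = 0 from rfl]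
lemma n23 : ∑ k, (v2 k - v3 k) ^ 2 ≠ 16 := by rw [d23]; norm_num
lemma n32 : ∑ k, (v3 k - v2 k) ^ 2 ≠ 16 := by rw [sum_sq_comm, d23]; norm_num
lemma d24 : ∑ k, (v2 k - v4 k) ^ 2 = 32 := by
  rw [Fin.sum_univ_seven]
  norm_num [show v2 0 = 2 from rfl, show v2 1 = -2 from rfl, show v2 2 = -2 from rfl, show v2 3 = 0 from rfl, show v2 4 = 0 from rfl, show v2 5 = 0 from rfl, show v2 6 = 0 from rfl, show v4 0 = -2 from rfl, show v4 1 = -2 from rfl, show v4 2 = 2 from rfl, show v4 3 = 0 from rfl, show v4 4 = 0 from rfl, show v4 5 = 0 from rfl, show v4 6 = 0 from rfl]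
lemma n24 : ∑ k, (v2 k - v4 k) ^ 2 ≠ 16 := by rw [d24]; norm_num
lemma n42 : ∑ k, (v4 k - v2 k) ^ 2 ≠ 16 := by rw [sum_sq_comm, d24]; norm_num
lemma d34 : ∑ k, (v3 k - v4 k) ^ 2 = 32 := by
  rw [Fin.sum_univ_seven]
  norm_num [show v3 0 = -2 from rfl, show v3 1 = 2 from rfl, show v3 2 = -2 from rfl, show v3 3 = 0 from rfl, show v3 4 = 0 from rfl, show v3 5 = 0 from rfl, show v3 6 = 0 from rfl, show v4 0 = -2 from rfl, show v4 1 = -2 from rfl, show v4 2 = 2 from rfl, show v4 3 = 0 from rfl, show v4 4 = 0 from rfl, show v4 5 = 0 from rfl, show v4 6 = 0 from rfl]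
lemma n34 : ∑ k, (v3 k - v4 k) ^ 2 ≠ 16 := by rw [d34]; norm_num
lemma n43 : ∑ k, (v4 k - v3 k) ^ 2 ≠ 16 := by rw [sum_sq_comm, d34]; norm_num


/-- The graph `H` on `S` (squared distance `16`) has `56` vertices and
independence number `4`. -/
theorem card_and_indepNum_H :
    Sset.ncard = 56 ∧
    (∃ M : Set ↥Sset,
      M.Pairwise (fun a b => ¬ (distSqGraph Sset 16).Adj a b) ∧ M.ncard = 4) ∧
    ∀ M : Set ↥Sset,
      M.Pairwise (fun a b => ¬ (distSqGraph Sset 16).Adj a b) → M.ncard ≤ 4 := by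
  haveI : Finite ↥Sset := Sset_finite.to_subtype
  refine ⟨Sset_ncard, ?_, ?_⟩
  · -- existence of an independent 4-set
    set m1 : ↥Sset := ⟨v1, v1S⟩
    set m2 : ↥Sset := ⟨v2, v2S⟩
    set m3 : ↥Sset := ⟨v3, v3S⟩
    set m4 : ↥Sset := ⟨v4, v4S⟩
    have h12 : m1 ≠ m2 := fun h => (by decide : v1 ≠ v2) (congrArg Subtype.val h)
    have h13 : m1 ≠ m3 := fun h => (by decide : v1 ≠ v3) (congrArg Subtype.val h)
    have h14 : m1 ≠ m4 := fun h => (by decide : v1 ≠ v4) (congrArg Subtype.val h)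
    have h23 : m2 ≠ m3 := fun h => (by decide : v2 ≠ v3) (congrArg Subtype.val h)
    have h24 : m2 ≠ m4 := fun h => (by decide : v2 ≠ v4) (congrArg Subtype.val h)
    have h34 : m3 ≠ m4 := fun h => (by decide : v3 ≠ v4) (congrArg Subtype.val h)
    refine ⟨{m1, m2, m3, m4}, ?_, ?_⟩
    · intro u hu v hv huv
      rintro ⟨hne', hsum⟩
      simp only [Set.mem_insert_iff, Set.mem_singleton_iff] at hu hv
      rcases hu with rfl | rfl | rfl | rfl <;> rcases hv with rfl | rfl | rfl | rfl <;>
        first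
          | exact huv rfl
          | exact n12 hsum | exact n13 hsum | exact n14 hsum
          | exact n21 hsum | exact n23 hsum | exact n24 hsum
          | exact n31 hsum | exact n32 hsum | exact n34 hsum
          | exact n41 hsum | exact n42 hsum | exact n43 hsum
    · rw [Set.ncard_insert_of_notMem (by simp [h12, h13, h14]),
        Set.ncard_insert_of_notMem (by simp [h23, h24]),
        Set.ncard_insert_of_notMem (by simp [h34]), Set.ncard_singleton]
  · intro M hM
    by_contra hcard
    push_neg at hcard
    have h5 : 5 ≤ M.ncard := hcard
    have hMfin : M.Finite := Set.toFinite M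
    have hcard' : M.ncard = hMfin.toFinset.card := Set.ncard_eq_toFinset_card M hMfin
    rw [hcard'] at h5
    obtain ⟨a, ha, b, hb, c, hc, d, hd, e, he,
      hab, hac, had, hae, hbc, hbd, hbe, hcd, hce, hde⟩ := exists_five_fs _ h5
    rw [Set.Finite.mem_toFinset] at ha hb hc hd he
    have key : ∀ u ∈ M, ∀ v ∈ M, u ≠ v →
        ∑ k, ((u : ↥Sset).1 k - (v : ↥Sset).1 k) ^ 2 ≠ 16 :=
      fun u hu v hv huv hs => hM hu hv huv ⟨huv, hs⟩
    have hyM : ∀ i, (![a, b, c, d, e] : Fin 5 → ↥Sset) i ∈ M := by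
      intro i
      fin_cases i
      · exact ha
      · exact hb
      · exact hc
      · exact hd
      · exact he
    have hyne : ∀ i j : Fin 5, i ≠ j →
        (![a, b, c, d, e] : Fin 5 → ↥Sset) i ≠ (![a, b, c, d, e] : Fin 5 → ↥Sset) j := by
      intro i j hij
      fin_cases i <;> fin_cases j <;>
        first
          | exact absurd rfl hij
          | exact hab | exact hac | exact had | exact hae | exact hbc | exact hbd
          | exact hbe | exact hcd | exact hce | exact hde
          | exact fun h => hab h.symm | exact fun h => hac h.symm
          | exact fun h => had h.symm | exact fun h => hae h.symm
          | exact fun h => hbc h.symm | exact fun h => hbd h.symm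
          | exact fun h => hbe h.symm | exact fun h => hcd h.symm
          | exact fun h => hce h.symm | exact fun h => hde h.symm
    exact no_five (fun i => ((![a, b, c, d, e] : Fin 5 → ↥Sset) i).1)
      (fun i => ((![a, b, c, d, e] : Fin 5 → ↥Sset) i).2)
      (fun i j hij h => hyne i j hij (Subtype.ext h))
      (fun i j hij => key _ (hyM i) _ (hyM j) (hyne i j hij))
end

section
/- Let F = {{1,2,3},{1,4,5},{1,6,7},{2,4,7},{2,5,6},{3,4,6},{3,5,7}} and for each triple {i,j,k} ∈ F let S_{ijk} be the set of vectors in ℚ^7 whose coordinates at positions i, j, k are each ±2 and are 0 elsewhere; let S be the union of the seven sets S_{ijk}, and let H be the simple graph on S in which two distinct vectors are adjacent if and only if their squared Euclidean distance equals 16. Then the chromatic number of H equals 14. -/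
def tblZ : List (List ℤ) := [
  [-2, -2, -2, 0, 0, 0, 0],
  [2, -2, -2, 0, 0, 0, 0],
  [-2, 2, -2, 0, 0, 0, 0],
  [2, 2, -2, 0, 0, 0, 0],
  [-2, -2, 2, 0, 0, 0, 0],
  [2, -2, 2, 0, 0, 0, 0],
  [-2, 2, 2, 0, 0, 0, 0],
  [2, 2, 2, 0, 0, 0, 0],
  [-2, 0, 0, -2, -2, 0, 0],
  [2, 0, 0, -2, -2, 0, 0],
  [-2, 0, 0, 2, -2, 0, 0],
  [2, 0, 0, 2, -2, 0, 0],
  [-2, 0, 0, -2, 2, 0, 0],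
  [2, 0, 0, -2, 2, 0, 0],
  [-2, 0, 0, 2, 2, 0, 0],
  [2, 0, 0, 2, 2, 0, 0],
  [-2, 0, 0, 0, 0, -2, -2],
  [2, 0, 0, 0, 0, -2, -2],
  [-2, 0, 0, 0, 0, 2, -2],
  [2, 0, 0, 0, 0, 2, -2],
  [-2, 0, 0, 0, 0, -2, 2],
  [2, 0, 0, 0, 0, -2, 2],
  [-2, 0, 0, 0, 0, 2, 2],
  [2, 0, 0, 0, 0, 2, 2],
  [0, -2, 0, -2, 0, 0, -2],
  [0, 2, 0, -2, 0, 0, -2],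
  [0, -2, 0, 2, 0, 0, -2],
  [0, 2, 0, 2, 0, 0, -2],
  [0, -2, 0, -2, 0, 0, 2],
  [0, 2, 0, -2, 0, 0, 2],
  [0, -2, 0, 2, 0, 0, 2],
  [0, 2, 0, 2, 0, 0, 2],
  [0, -2, 0, 0, -2, -2, 0],
  [0, 2, 0, 0, -2, -2, 0],
  [0, -2, 0, 0, 2, -2, 0],
  [0, 2, 0, 0, 2, -2, 0],
  [0, -2, 0, 0, -2, 2, 0],
  [0, 2, 0, 0, -2, 2, 0],
  [0, -2, 0, 0, 2, 2, 0],
  [0, 2, 0, 0, 2, 2, 0],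
  [0, 0, -2, -2, 0, -2, 0],
  [0, 0, 2, -2, 0, -2, 0],
  [0, 0, -2, 2, 0, -2, 0],
  [0, 0, 2, 2, 0, -2, 0],
  [0, 0, -2, -2, 0, 2, 0],
  [0, 0, 2, -2, 0, 2, 0],
  [0, 0, -2, 2, 0, 2, 0],
  [0, 0, 2, 2, 0, 2, 0],
  [0, 0, -2, 0, -2, 0, -2],
  [0, 0, 2, 0, -2, 0, -2],
  [0, 0, -2, 0, 2, 0, -2],
  [0, 0, 2, 0, 2, 0, -2],
  [0, 0, -2, 0, -2, 0, 2],
  [0, 0, 2, 0, -2, 0, 2],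
  [0, 0, -2, 0, 2, 0, 2],
  [0, 0, 2, 0, 2, 0, 2]]

def adjRows : List ℕ := [24019198012642582, 24019198018234921, 24019564510926153, 24019564516518534, 48038029521409377, 48038029527001746, 48038396019692948, 48038396025285224, 14411518809806421, 14411518815381930, 14579746655783253, 14579746661369514, 57477847376552277, 57477847382135466, 57646075222529109, 57646075228088490, 4238682002707797, 4238682003974826, 4487038489941333, 4487038493960874, 67570555542394197, 67570555545627306, 67818912029627733, 67818912026765994, 4278565185991475, 4278930576978892, 4446791320718387, 4447157416348876, 67610436218925875, 67610802113229772, 67778662353652787, 67779026687675596, 14371812405350195, 14371895435792332, 57437702885470259, 57437966304538828, 14619524654174003, 14619736533635020, 57685415134294067, 57685227581796556, 23949627559719695, 47895891301053424, 24005705219689487, 47998148449389808, 24033057309471503, 48012306399638512, 24089134969441295, 47966129478225136, 6286127271972623, 11727610317836272, 20642008214269967, 37905440281981168, 27396754314891023, 41282486662074352, 41752635257188367, 29461194770280688]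

def colL : List ℕ := [0, 1, 1, 0, 1, 0, 0, 1, 2, 3, 3, 2, 3, 2, 2, 3, 4, 5, 5, 4, 5, 4, 4, 5, 6, 7, 7, 6, 7, 6, 6, 7, 8, 9, 9, 8, 9, 8, 8, 9, 10, 11, 11, 10, 11, 10, 10, 11, 12, 13, 13, 12, 13, 12, 12, 13]

def vecZ (v : Fin 56) (p : Fin 7) : ℤ := (tblZ.getD v.1 []).getD p.1 0

def vec (v : Fin 56) : Fin 7 → ℚ := fun p => ((vecZ v p : ℤ) : ℚ)

lemma vec_mem (v : Fin 56) : vec v ∈ Sset := by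
  show ∃ A ∈ fano, (∀ i ∈ A, vec v i = 2 ∨ vec v i = -2) ∧ ∀ i ∉ A, vec v i = 0
  revert v; decide

lemma vec_inj : ∀ v w : Fin 56, (∀ p, vec v p = vec w p) → v = w := by decide

lemma finseven (p : Fin 7) : p = 0 ∨ p = 1 ∨ p = 2 ∨ p = 3 ∨ p = 4 ∨ p = 5 ∨ p = 6 := by
  revert p; decide

lemma vec_surj (x : Fin 7 → ℚ) (hx : x ∈ Sset) : ∃ v : Fin 56, vec v = x := by
  obtain ⟨A, hA, h1, h2⟩ := hx
  simp only [fano, Finset.mem_insert, Finset.mem_singleton] at hA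
  rcases hA with rfl|rfl|rfl|rfl|rfl|rfl|rfl
  · have z1 := h2 3 (by decide)
    have z2 := h2 4 (by decide)
    have z3 := h2 5 (by decide)
    have z4 := h2 6 (by decide)
    obtain ha|ha := h1 0 (by decide) <;> obtain hb|hb := h1 1 (by decide) <;>
      obtain hc|hc := h1 2 (by decide)
    · exact ⟨⟨7, by norm_num⟩, by funext p; rcases finseven p with rfl|rfl|rfl|rfl|rfl|rfl|rfl <;> simp only [ha, hb, hc, z1, z2, z3, z4] <;> decide⟩
    · exact ⟨⟨3, by norm_num⟩, by funext p; rcases finseven p with rfl|rfl|rfl|rfl|rfl|rfl|rfl <;> simp only [ha, hb, hc, z1, z2, z3, z4] <;> decide⟩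
    · exact ⟨⟨5, by norm_num⟩, by funext p; rcases finseven p with rfl|rfl|rfl|rfl|rfl|rfl|rfl <;> simp only [ha, hb, hc, z1, z2, z3, z4] <;> decide⟩
    · exact ⟨⟨1, by norm_num⟩, by funext p; rcases finseven p with rfl|rfl|rfl|rfl|rfl|rfl|rfl <;> simp only [ha, hb, hc, z1, z2, z3, z4] <;> decide⟩
    · exact ⟨⟨6, by norm_num⟩, by funext p; rcases finseven p with rfl|rfl|rfl|rfl|rfl|rfl|rfl <;> simp only [ha, hb, hc, z1, z2, z3, z4] <;> decide⟩
    · exact ⟨⟨2, by norm_num⟩, by funext p; rcases finseven p with rfl|rfl|rfl|rfl|rfl|rfl|rfl <;> simp only [ha, hb, hc, z1, z2, z3, z4] <;> decide⟩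
    · exact ⟨⟨4, by norm_num⟩, by funext p; rcases finseven p with rfl|rfl|rfl|rfl|rfl|rfl|rfl <;> simp only [ha, hb, hc, z1, z2, z3, z4] <;> decide⟩
    · exact ⟨⟨0, by norm_num⟩, by funext p; rcases finseven p with rfl|rfl|rfl|rfl|rfl|rfl|rfl <;> simp only [ha, hb, hc, z1, z2, z3, z4] <;> decide⟩
  · have z1 := h2 1 (by decide)
    have z2 := h2 2 (by decide)
    have z3 := h2 5 (by decide)
    have z4 := h2 6 (by decide)
    obtain ha|ha := h1 0 (by decide) <;> obtain hb|hb := h1 3 (by decide) <;>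
      obtain hc|hc := h1 4 (by decide)
    · exact ⟨⟨15, by norm_num⟩, by funext p; rcases finseven p with rfl|rfl|rfl|rfl|rfl|rfl|rfl <;> simp only [ha, hb, hc, z1, z2, z3, z4] <;> decide⟩
    · exact ⟨⟨11, by norm_num⟩, by funext p; rcases finseven p with rfl|rfl|rfl|rfl|rfl|rfl|rfl <;> simp only [ha, hb, hc, z1, z2, z3, z4] <;> decide⟩
    · exact ⟨⟨13, by norm_num⟩, by funext p; rcases finseven p with rfl|rfl|rfl|rfl|rfl|rfl|rfl <;> simp only [ha, hb, hc, z1, z2, z3, z4] <;> decide⟩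
    · exact ⟨⟨9, by norm_num⟩, by funext p; rcases finseven p with rfl|rfl|rfl|rfl|rfl|rfl|rfl <;> simp only [ha, hb, hc, z1, z2, z3, z4] <;> decide⟩
    · exact ⟨⟨14, by norm_num⟩, by funext p; rcases finseven p with rfl|rfl|rfl|rfl|rfl|rfl|rfl <;> simp only [ha, hb, hc, z1, z2, z3, z4] <;> decide⟩
    · exact ⟨⟨10, by norm_num⟩, by funext p; rcases finseven p with rfl|rfl|rfl|rfl|rfl|rfl|rfl <;> simp only [ha, hb, hc, z1, z2, z3, z4] <;> decide⟩
    · exact ⟨⟨12, by norm_num⟩, by funext p; rcases finseven p with rfl|rfl|rfl|rfl|rfl|rfl|rfl <;> simp only [ha, hb, hc, z1, z2, z3, z4] <;> decide⟩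
    · exact ⟨⟨8, by norm_num⟩, by funext p; rcases finseven p with rfl|rfl|rfl|rfl|rfl|rfl|rfl <;> simp only [ha, hb, hc, z1, z2, z3, z4] <;> decide⟩
  · have z1 := h2 1 (by decide)
    have z2 := h2 2 (by decide)
    have z3 := h2 3 (by decide)
    have z4 := h2 4 (by decide)
    obtain ha|ha := h1 0 (by decide) <;> obtain hb|hb := h1 5 (by decide) <;>
      obtain hc|hc := h1 6 (by decide)
    · exact ⟨⟨23, by norm_num⟩, by funext p; rcases finseven p with rfl|rfl|rfl|rfl|rfl|rfl|rfl <;> simp only [ha, hb, hc, z1, z2, z3, z4] <;> decide⟩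
    · exact ⟨⟨19, by norm_num⟩, by funext p; rcases finseven p with rfl|rfl|rfl|rfl|rfl|rfl|rfl <;> simp only [ha, hb, hc, z1, z2, z3, z4] <;> decide⟩
    · exact ⟨⟨21, by norm_num⟩, by funext p; rcases finseven p with rfl|rfl|rfl|rfl|rfl|rfl|rfl <;> simp only [ha, hb, hc, z1, z2, z3, z4] <;> decide⟩
    · exact ⟨⟨17, by norm_num⟩, by funext p; rcases finseven p with rfl|rfl|rfl|rfl|rfl|rfl|rfl <;> simp only [ha, hb, hc, z1, z2, z3, z4] <;> decide⟩
    · exact ⟨⟨22, by norm_num⟩, by funext p; rcases finseven p with rfl|rfl|rfl|rfl|rfl|rfl|rfl <;> simp only [ha, hb, hc, z1, z2, z3, z4] <;> decide⟩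
    · exact ⟨⟨18, by norm_num⟩, by funext p; rcases finseven p with rfl|rfl|rfl|rfl|rfl|rfl|rfl <;> simp only [ha, hb, hc, z1, z2, z3, z4] <;> decide⟩
    · exact ⟨⟨20, by norm_num⟩, by funext p; rcases finseven p with rfl|rfl|rfl|rfl|rfl|rfl|rfl <;> simp only [ha, hb, hc, z1, z2, z3, z4] <;> decide⟩
    · exact ⟨⟨16, by norm_num⟩, by funext p; rcases finseven p with rfl|rfl|rfl|rfl|rfl|rfl|rfl <;> simp only [ha, hb, hc, z1, z2, z3, z4] <;> decide⟩
  · have z1 := h2 0 (by decide)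
    have z2 := h2 2 (by decide)
    have z3 := h2 4 (by decide)
    have z4 := h2 5 (by decide)
    obtain ha|ha := h1 1 (by decide) <;> obtain hb|hb := h1 3 (by decide) <;>
      obtain hc|hc := h1 6 (by decide)
    · exact ⟨⟨31, by norm_num⟩, by funext p; rcases finseven p with rfl|rfl|rfl|rfl|rfl|rfl|rfl <;> simp only [ha, hb, hc, z1, z2, z3, z4] <;> decide⟩
    · exact ⟨⟨27, by norm_num⟩, by funext p; rcases finseven p with rfl|rfl|rfl|rfl|rfl|rfl|rfl <;> simp only [ha, hb, hc, z1, z2, z3, z4] <;> decide⟩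
    · exact ⟨⟨29, by norm_num⟩, by funext p; rcases finseven p with rfl|rfl|rfl|rfl|rfl|rfl|rfl <;> simp only [ha, hb, hc, z1, z2, z3, z4] <;> decide⟩
    · exact ⟨⟨25, by norm_num⟩, by funext p; rcases finseven p with rfl|rfl|rfl|rfl|rfl|rfl|rfl <;> simp only [ha, hb, hc, z1, z2, z3, z4] <;> decide⟩
    · exact ⟨⟨30, by norm_num⟩, by funext p; rcases finseven p with rfl|rfl|rfl|rfl|rfl|rfl|rfl <;> simp only [ha, hb, hc, z1, z2, z3, z4] <;> decide⟩
    · exact ⟨⟨26, by norm_num⟩, by funext p; rcases finseven p with rfl|rfl|rfl|rfl|rfl|rfl|rfl <;> simp only [ha, hb, hc, z1, z2, z3, z4] <;> decide⟩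
    · exact ⟨⟨28, by norm_num⟩, by funext p; rcases finseven p with rfl|rfl|rfl|rfl|rfl|rfl|rfl <;> simp only [ha, hb, hc, z1, z2, z3, z4] <;> decide⟩
    · exact ⟨⟨24, by norm_num⟩, by funext p; rcases finseven p with rfl|rfl|rfl|rfl|rfl|rfl|rfl <;> simp only [ha, hb, hc, z1, z2, z3, z4] <;> decide⟩
  · have z1 := h2 0 (by decide)
    have z2 := h2 2 (by decide)
    have z3 := h2 3 (by decide)
    have z4 := h2 6 (by decide)
    obtain ha|ha := h1 1 (by decide) <;> obtain hb|hb := h1 4 (by decide) <;>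
      obtain hc|hc := h1 5 (by decide)
    · exact ⟨⟨39, by norm_num⟩, by funext p; rcases finseven p with rfl|rfl|rfl|rfl|rfl|rfl|rfl <;> simp only [ha, hb, hc, z1, z2, z3, z4] <;> decide⟩
    · exact ⟨⟨35, by norm_num⟩, by funext p; rcases finseven p with rfl|rfl|rfl|rfl|rfl|rfl|rfl <;> simp only [ha, hb, hc, z1, z2, z3, z4] <;> decide⟩
    · exact ⟨⟨37, by norm_num⟩, by funext p; rcases finseven p with rfl|rfl|rfl|rfl|rfl|rfl|rfl <;> simp only [ha, hb, hc, z1, z2, z3, z4] <;> decide⟩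
    · exact ⟨⟨33, by norm_num⟩, by funext p; rcases finseven p with rfl|rfl|rfl|rfl|rfl|rfl|rfl <;> simp only [ha, hb, hc, z1, z2, z3, z4] <;> decide⟩
    · exact ⟨⟨38, by norm_num⟩, by funext p; rcases finseven p with rfl|rfl|rfl|rfl|rfl|rfl|rfl <;> simp only [ha, hb, hc, z1, z2, z3, z4] <;> decide⟩
    · exact ⟨⟨34, by norm_num⟩, by funext p; rcases finseven p with rfl|rfl|rfl|rfl|rfl|rfl|rfl <;> simp only [ha, hb, hc, z1, z2, z3, z4] <;> decide⟩
    · exact ⟨⟨36, by norm_num⟩, by funext p; rcases finseven p with rfl|rfl|rfl|rfl|rfl|rfl|rfl <;> simp only [ha, hb, hc, z1, z2, z3, z4] <;> decide⟩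
    · exact ⟨⟨32, by norm_num⟩, by funext p; rcases finseven p with rfl|rfl|rfl|rfl|rfl|rfl|rfl <;> simp only [ha, hb, hc, z1, z2, z3, z4] <;> decide⟩
  · have z1 := h2 0 (by decide)
    have z2 := h2 1 (by decide)
    have z3 := h2 4 (by decide)
    have z4 := h2 6 (by decide)
    obtain ha|ha := h1 2 (by decide) <;> obtain hb|hb := h1 3 (by decide) <;>
      obtain hc|hc := h1 5 (by decide)
    · exact ⟨⟨47, by norm_num⟩, by funext p; rcases finseven p with rfl|rfl|rfl|rfl|rfl|rfl|rfl <;> simp only [ha, hb, hc, z1, z2, z3, z4] <;> decide⟩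
    · exact ⟨⟨43, by norm_num⟩, by funext p; rcases finseven p with rfl|rfl|rfl|rfl|rfl|rfl|rfl <;> simp only [ha, hb, hc, z1, z2, z3, z4] <;> decide⟩
    · exact ⟨⟨45, by norm_num⟩, by funext p; rcases finseven p with rfl|rfl|rfl|rfl|rfl|rfl|rfl <;> simp only [ha, hb, hc, z1, z2, z3, z4] <;> decide⟩
    · exact ⟨⟨41, by norm_num⟩, by funext p; rcases finseven p with rfl|rfl|rfl|rfl|rfl|rfl|rfl <;> simp only [ha, hb, hc, z1, z2, z3, z4] <;> decide⟩
    · exact ⟨⟨46, by norm_num⟩, by funext p; rcases finseven p with rfl|rfl|rfl|rfl|rfl|rfl|rfl <;> simp only [ha, hb, hc, z1, z2, z3, z4] <;> decide⟩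
    · exact ⟨⟨42, by norm_num⟩, by funext p; rcases finseven p with rfl|rfl|rfl|rfl|rfl|rfl|rfl <;> simp only [ha, hb, hc, z1, z2, z3, z4] <;> decide⟩
    · exact ⟨⟨44, by norm_num⟩, by funext p; rcases finseven p with rfl|rfl|rfl|rfl|rfl|rfl|rfl <;> simp only [ha, hb, hc, z1, z2, z3, z4] <;> decide⟩
    · exact ⟨⟨40, by norm_num⟩, by funext p; rcases finseven p with rfl|rfl|rfl|rfl|rfl|rfl|rfl <;> simp only [ha, hb, hc, z1, z2, z3, z4] <;> decide⟩
  · have z1 := h2 0 (by decide)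
    have z2 := h2 1 (by decide)
    have z3 := h2 3 (by decide)
    have z4 := h2 5 (by decide)
    obtain ha|ha := h1 2 (by decide) <;> obtain hb|hb := h1 4 (by decide) <;>
      obtain hc|hc := h1 6 (by decide)
    · exact ⟨⟨55, by norm_num⟩, by funext p; rcases finseven p with rfl|rfl|rfl|rfl|rfl|rfl|rfl <;> simp only [ha, hb, hc, z1, z2, z3, z4] <;> decide⟩
    · exact ⟨⟨51, by norm_num⟩, by funext p; rcases finseven p with rfl|rfl|rfl|rfl|rfl|rfl|rfl <;> simp only [ha, hb, hc, z1, z2, z3, z4] <;> decide⟩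
    · exact ⟨⟨53, by norm_num⟩, by funext p; rcases finseven p with rfl|rfl|rfl|rfl|rfl|rfl|rfl <;> simp only [ha, hb, hc, z1, z2, z3, z4] <;> decide⟩
    · exact ⟨⟨49, by norm_num⟩, by funext p; rcases finseven p with rfl|rfl|rfl|rfl|rfl|rfl|rfl <;> simp only [ha, hb, hc, z1, z2, z3, z4] <;> decide⟩
    · exact ⟨⟨54, by norm_num⟩, by funext p; rcases finseven p with rfl|rfl|rfl|rfl|rfl|rfl|rfl <;> simp only [ha, hb, hc, z1, z2, z3, z4] <;> decide⟩
    · exact ⟨⟨50, by norm_num⟩, by funext p; rcases finseven p with rfl|rfl|rfl|rfl|rfl|rfl|rfl <;> simp only [ha, hb, hc, z1, z2, z3, z4] <;> decide⟩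
    · exact ⟨⟨52, by norm_num⟩, by funext p; rcases finseven p with rfl|rfl|rfl|rfl|rfl|rfl|rfl <;> simp only [ha, hb, hc, z1, z2, z3, z4] <;> decide⟩
    · exact ⟨⟨48, by norm_num⟩, by funext p; rcases finseven p with rfl|rfl|rfl|rfl|rfl|rfl|rfl <;> simp only [ha, hb, hc, z1, z2, z3, z4] <;> decide⟩

def G : SimpleGraph (Fin 56) where
  Adj v w := v ≠ w ∧ ∑ p, (vecZ v p - vecZ w p) ^ 2 = 16
  symm := by
    constructor
    rintro v w ⟨hne, h⟩
    refine ⟨hne.symm, ?_⟩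
    rw [← h]
    exact Finset.sum_congr rfl fun i _ => by ring
  loopless := by constructor; rintro v ⟨h, -⟩; exact h rfl

instance : DecidableRel G.Adj := fun v w =>
  inferInstanceAs (Decidable (v ≠ w ∧ ∑ p, (vecZ v p - vecZ w p) ^ 2 = 16))

def adjN (a b : ℕ) : Bool := (adjRows.getD a 0).testBit b

def adjB (v w : Fin 56) : Bool := adjN v.1 w.1

lemma bridge : ∀ v w : Fin 56, G.Adj v w ↔ adjB v w = true := by decide

/-- Fuel-based DFS: `srch fuel k l = true` iff (given enough fuel) the list `l`
contains `k` elements forming an independent set w.r.t. `adjN`. -/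
def srch (fuel : ℕ) : ℕ → List ℕ → Bool :=
  match fuel with
  | 0 => fun k _ => k == 0
  | fuel + 1 => fun k l =>
    match k with
    | 0 => true
    | k + 1 =>
      match l with
      | [] => false
      | b :: rest =>
          srch fuel (k + 1) rest || srch fuel k (rest.filter fun c => !adjN b c)

lemma srch_sound : ∀ fuel (k : ℕ) (l s : List ℕ), s.Sublist l → s.length = k →
    s.Pairwise (fun a b => adjN a b = false) → l.length ≤ fuel →
    srch fuel k l = true := by
  intro fuel
  induction fuel with
  | zero =>
    intro k l s hsub hlen _ hfl
    have hl : l = [] := List.eq_nil_of_length_eq_zero (Nat.le_zero.mp hfl)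
    subst hl
    have hs : s = [] := List.eq_nil_of_sublist_nil hsub
    subst hs
    simp at hlen
    subst hlen
    rfl
  | succ fuel ih =>
    intro k l s hsub hlen hpw hfl
    match k with
    | 0 => rfl
    | k + 1 =>
      match l with
      | [] =>
        have hs : s = [] := List.eq_nil_of_sublist_nil hsub
        subst hs
        simp at hlen
      | b :: rest =>
        show (srch fuel (k + 1) rest || _) = true
        have hfl' : rest.length ≤ fuel := by
          simpa using Nat.le_of_succ_le_succ hfl
        cases hsub with
        | cons _ h =>
          rw [ih (k + 1) rest s h hlen hpw hfl']
          rfl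
        | cons_cons _ h =>
          -- s = b :: s', s' <+ rest
          rename_i s'
          rw [List.pairwise_cons] at hpw
          obtain ⟨hhead, htail⟩ := hpw
          have hfilt : s'.Sublist (rest.filter fun c => !adjN b c) := by
            have h1 : s'.filter (fun c => !adjN b c) = s' :=
              List.filter_eq_self.mpr fun x hx => by rw [hhead x hx]; rfl
            have h2 := h.filter (fun c => !adjN b c)
            rwa [h1] at h2
          have hlen' : (rest.filter fun c => !adjN b c).length ≤ fuel :=
            le_trans (List.length_filter_le _ _) hfl'
          rw [ih k _ s' hfilt (by simpa using hlen) htail hlen']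
          simp

lemma nosrch : srch 60 5 (List.range 56) = false := by decide

lemma indepBound (s : Finset (Fin 56)) (hs : ∀ x ∈ s, ∀ y ∈ s, adjB x y = false) :
    s.card ≤ 4 := by
  by_contra hcard
  obtain ⟨t, hts, ht5⟩ := Finset.exists_subset_card_eq (show 5 ≤ s.card by omega)
  set m : Finset ℕ := t.map ⟨Fin.val, Fin.val_injective⟩ with hm
  set l : List ℕ := m.sort (· ≤ ·) with hl
  have hmem : ∀ x ∈ l, ∃ v : Fin 56, v ∈ s ∧ v.1 = x := by
    intro x hx
    rw [hl, Finset.mem_sort] at hx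
    simp only [hm, Finset.mem_map, Function.Embedding.coeFn_mk] at hx
    obtain ⟨v, hv, rfl⟩ := hx
    exact ⟨v, hts hv, rfl⟩
  have hsub : l.Sublist (List.range 56) := by
    apply List.sublist_of_subperm_of_pairwise _ (Finset.pairwise_sort _ _)
      (List.pairwise_le_range (n := 56))
    rw [← Multiset.coe_le, Finset.sort_eq]
    show m.val ≤ (Finset.range 56).val
    rw [Finset.val_le_iff]
    intro x hx
    rw [Finset.mem_range]
    obtain ⟨v, _, rfl⟩ := hmem x (by rw [hl, Finset.mem_sort]; exact hx)
    exact v.2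
  have hlen : l.length = 5 := by
    rw [hl, Finset.length_sort, hm, Finset.card_map, ht5]
  have hpw : l.Pairwise (fun a b => adjN a b = false) := by
    apply List.pairwise_of_forall_mem_list
    intro a ha b hb
    obtain ⟨v, hv, rfl⟩ := hmem a ha
    obtain ⟨w, hw, rfl⟩ := hmem b hb
    exact hs v hv w hw
  have hres := srch_sound 60 5 (List.range 56) l hsub hlen hpw (by simp)
  rw [nosrch] at hres
  exact Bool.noConfusion hres

lemma G_not_colorable_13 : ¬ G.Colorable 13 := by
  rintro ⟨c⟩
  have hfib : ∀ k : Fin 13, (Finset.univ.filter fun v => c v = k).card ≤ 4 := by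
    intro k
    apply indepBound
    intro x hx y hy
    simp only [Finset.mem_filter, Finset.mem_univ, true_and] at hx hy
    cases h : adjB x y with
    | false => rfl
    | true => exact absurd (hx.trans hy.symm) (c.valid ((bridge x y).mpr h))
  have h56 : (Finset.univ : Finset (Fin 56)).card =
      ∑ k : Fin 13, (Finset.univ.filter fun v => c v = k).card :=
    Finset.card_eq_sum_card_fiberwise fun v _ => Finset.mem_univ (c v)
  have hle : ∑ k : Fin 13, (Finset.univ.filter fun v => c v = k).card ≤
      ∑ _k : Fin 13, 4 := Finset.sum_le_sum fun k _ => hfib k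
  simp only [Finset.card_univ, Fintype.card_fin, Finset.sum_const,
    Finset.card_univ, smul_eq_mul] at h56 hle
  omega

lemma colL_lt : ∀ v : Fin 56, colL.getD v.1 0 < 14 := by decide

def colF (v : Fin 56) : Fin 14 := ⟨colL.getD v.1 0, colL_lt v⟩

lemma colF_valid : ∀ v w : Fin 56, adjB v w = true → colF v ≠ colF w := by decide

lemma G_colorable_14 : G.Colorable 14 :=
  ⟨SimpleGraph.Coloring.mk colF fun {v w} h => colF_valid v w ((bridge v w).mp h)⟩

noncomputable def eqv : Fin 56 ≃ Sset :=
  Equiv.ofBijective (fun v => ⟨vec v, vec_mem v⟩)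
    ⟨fun v w h => vec_inj v w fun p => congrFun (congrArg Subtype.val h) p,
     fun x => by obtain ⟨v, hv⟩ := vec_surj x.1 x.2; exact ⟨v, Subtype.ext hv⟩⟩

lemma sum_cast (v w : Fin 56) :
    (∑ i, ((vec v i) - (vec w i)) ^ 2 : ℚ) =
      ((∑ p, (vecZ v p - vecZ w p) ^ 2 : ℤ) : ℚ) := by
  simp only [vec]
  norm_cast

noncomputable def iso : G ≃g distSqGraph Sset 16 where
  toEquiv := eqv
  map_rel_iff' := by
    intro v w
    show (eqv v ≠ eqv w ∧ ∑ i, ((vec v i) - (vec w i)) ^ 2 = (16:ℚ)) ↔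
      (v ≠ w ∧ ∑ p, (vecZ v p - vecZ w p) ^ 2 = (16:ℤ))
    rw [sum_cast v w]
    constructor
    · rintro ⟨h1, h2⟩
      exact ⟨fun hvw => h1 (by rw [hvw]), by exact_mod_cast h2⟩
    · rintro ⟨h1, h2⟩
      exact ⟨fun h => h1 (eqv.injective h), by exact_mod_cast h2⟩

/-- The graph `H` on `S` (squared distance `16`) has chromatic number `14`. -/
theorem chromaticNumber_H_eq_fourteen :
    (distSqGraph Sset 16).chromaticNumber = 14 := by
  have hc14 : (distSqGraph Sset 16).Colorable 14 :=
    SimpleGraph.Colorable.of_hom iso.symm.toEmbedding.toHom G_colorable_14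
  have hnc13 : ¬ (distSqGraph Sset 16).Colorable 13 := fun h =>
    G_not_colorable_13 (SimpleGraph.Colorable.of_hom iso.toEmbedding.toHom h)
  refine le_antisymm ?_ ?_
  · exact_mod_cast hc14.chromaticNumber_le
  · have h13 : ¬ (distSqGraph Sset 16).chromaticNumber ≤ (13:ℕ) := fun hle =>
      hnc13 (SimpleGraph.chromaticNumber_le_iff_colorable.mp hle)
    have hlt := lt_of_not_ge h13
    have h' := Order.add_one_le_of_lt hlt
    refine le_trans (le_of_eq ?_) h'
    norm_cast
end
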